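/- Let (κ_n)_{n≥1} be a non-increasing sequence of nonnegative reals with κ_1 > 0 and Σ := ∑_{n≥1} κ_n < ∞, and let (X_n)_{n≥1} be independent real random variables on a probability space with X_n distributed as N(0,κ_n). Set Y = ∑_{n≥1} X_n². Then for every real M with M² > Σ, P(Y ≥ M²) ≤ exp( −((e−1)/(2e·κ_1))·M² + Σ/(2κ_1) ). -/

import Mathlib

open scoped NNReal ENNReal
open MeasureTheory ProbabilityTheory Real Filter Set

lemma gauss_exp_sq_aux {v : ℝ≥0} {t : ℝ} (ht : 0 ≤ t) (h : 2 * t * (v : ℝ) < 1) :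
    Integrable (fun x : ℝ => rexp (t * x ^ 2)) (gaussianReal 0 v) ∧
      ∫ x, rexp (t * x ^ 2) ∂(gaussianReal 0 v)
        = Real.sqrt ((1 - 2 * t * (v : ℝ))⁻¹) := by
  by_cases hv : v = 0
  · subst hv
    simp only [NNReal.coe_zero, mul_zero, sub_zero, inv_one, Real.sqrt_one,
      gaussianReal_zero_var]
    constructor
    · constructor
      · exact (measurable_exp.comp ((measurable_id.pow_const 2).const_mul t)).aestronglyMeasurable
      · rw [HasFiniteIntegral, lintegral_dirac]
        exact ENNReal.coe_lt_top
    · rw [integral_dirac]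
      simp
  · have hvpos : (0:ℝ) < v := NNReal.coe_pos.mpr (pos_iff_ne_zero.mpr hv)
    set b : ℝ := (2 * (v:ℝ))⁻¹ - t with hb
    have hbpos : 0 < b := by
      have h' : t < (2*(v:ℝ))⁻¹ := by
        rw [← one_div, lt_div_iff₀ (by positivity : (0:ℝ) < 2*(v:ℝ))]
        nlinarith
      simp only [hb, sub_pos]
      exact h'
    have hmeas : Measurable fun x : ℝ => (gaussianPDFReal 0 v x).toNNReal :=
      (measurable_gaussianPDFReal 0 v).real_toNNReal
    have hdens : gaussianReal 0 v
        = volume.withDensity fun x => ((gaussianPDFReal 0 v x).toNNReal : ENNReal) := by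
      rw [gaussianReal_of_var_ne_zero _ hv]
      rfl
    have heq : (fun x : ℝ => ((gaussianPDFReal 0 v x).toNNReal : ℝ≥0) • rexp (t * x ^ 2))
        = fun x : ℝ => (Real.sqrt (2 * π * (v:ℝ)))⁻¹ * rexp (-b * x ^ 2) := by
      funext x
      rw [NNReal.smul_def]
      rw [Real.coe_toNNReal _ (gaussianPDFReal_nonneg 0 v x)]
      rw [gaussianPDFReal]
      rw [smul_eq_mul, mul_assoc ((Real.sqrt (2 * π * (v:ℝ)))⁻¹), ← Real.exp_add]
      congr 2
      rw [hb]
      rw [div_eq_mul_inv, sub_zero]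
      ring
    have hint : Integrable (fun x : ℝ => (Real.sqrt (2 * π * (v:ℝ)))⁻¹ * rexp (-b * x ^ 2))
        volume := (integrable_exp_neg_mul_sq hbpos).const_mul _
    constructor
    · rw [hdens, integrable_withDensity_iff_integrable_smul hmeas]
      rw [show (fun x : ℝ => (gaussianPDFReal 0 v x).toNNReal • rexp (t * x ^ 2)) =
        (fun x : ℝ => ((gaussianPDFReal 0 v x).toNNReal : ℝ≥0) • rexp (t * x ^ 2)) from rfl, heq]
      exact hint
    · rw [hdens, integral_withDensity_eq_integral_smul hmeas]
      rw [show (fun x : ℝ => (gaussianPDFReal 0 v x).toNNReal • rexp (t * x ^ 2)) =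
        (fun x : ℝ => ((gaussianPDFReal 0 v x).toNNReal : ℝ≥0) • rexp (t * x ^ 2)) from rfl, heq]
      rw [integral_const_mul, integral_gaussian]
      rw [← Real.sqrt_inv, ← Real.sqrt_mul (by positivity)]
      congr 1
      have h2vb : 2 * (v:ℝ) * b = 1 - 2 * t * (v:ℝ) := by
        rw [hb, mul_sub, mul_inv_cancel₀ (by positivity)]
        ring
      rw [← h2vb]
      field_simp

lemma sqrt_inv_le_exp_aux {κ1 vn t : ℝ} (hκ1 : 0 < κ1) (hv0 : 0 ≤ vn) (hv : vn ≤ κ1)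
    (htdef : t = (rexp 1 - 1) / (2 * rexp 1 * κ1)) :
    Real.sqrt ((1 - 2 * t * vn)⁻¹) ≤ rexp (vn / (2 * κ1)) := by
  have he : (1:ℝ) < rexp 1 := by
    have := Real.add_one_lt_exp (one_ne_zero (α := ℝ))
    linarith
  set s : ℝ := vn / κ1 with hs
  have hs0 : 0 ≤ s := by positivity
  have hs1 : s ≤ 1 := by rw [hs, div_le_one hκ1]; exact hv
  have hkey : rexp (1 - s) ≤ s + (1 - s) * rexp 1 := by
    have h2 : rexp (s • (0:ℝ) + (1 - s) • (1:ℝ)) ≤ s • rexp 0 + (1 - s) • rexp 1 :=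
      convexOn_exp.2 (Set.mem_univ (0:ℝ)) (Set.mem_univ (1:ℝ)) hs0 (by linarith) (by ring)
    simpa using h2
  have hκ1ne : κ1 ≠ 0 := hκ1.ne'
  have hene : rexp 1 ≠ 0 := (exp_pos 1).ne'
  have h2tn : 2 * t * vn = (rexp 1 - 1) / rexp 1 * s := by
    rw [htdef, hs]
    field_simp
  have hexp : rexp (-s) ≤ 1 - 2 * t * vn := by
    have hes : rexp (-s) = rexp (1 - s) / rexp 1 := by
      rw [eq_div_iff (exp_pos 1).ne', ← Real.exp_add]
      ring_nf
    rw [hes, h2tn, div_le_iff₀ (exp_pos 1)]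
    have harr : (1 - (rexp 1 - 1) / rexp 1 * s) * rexp 1 = s + (1 - s) * rexp 1 := by
      field_simp
      ring
    rw [harr]
    exact hkey
  have hinv : (1 - 2 * t * vn)⁻¹ ≤ rexp s := by
    have h3 := inv_anti₀ (exp_pos (-s)) hexp
    rwa [Real.exp_neg, inv_inv] at h3
  calc Real.sqrt ((1 - 2 * t * vn)⁻¹) ≤ Real.sqrt (rexp s) := Real.sqrt_le_sqrt hinv
    _ = rexp (vn / (2 * κ1)) := by
        rw [show rexp s = rexp (vn / (2*κ1)) ^ 2 by
            rw [sq, ← Real.exp_add, hs]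
            congr 1
            field_simp
            ring]
        exact Real.sqrt_sq (exp_nonneg _)

/-- Simplified tail bound for the squared L² norm `Y = ∑ₙ Xₙ²` of a Gaussian process with
Karhunen–Loève variances `κₙ` (indexed by `n : ℕ`, `κ 0` playing the role of `κ₁`):
for `M² > Σ = ∑ₙ κₙ`,
`P(Y ≥ M²) ≤ exp(-((e-1)/(2e κ₁)) M² + Σ/(2κ₁))`. -/
theorem tail_bound_sum_sq_gaussians'
    {Ω : Type*} [MeasurableSpace Ω] (P : Measure Ω) [IsProbabilityMeasure P]
    (κ : ℕ → NNReal) (hmono : Antitone κ) (hκ1 : 0 < κ 0)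
    (hsum : Summable fun n => (κ n : ℝ))
    (X : ℕ → Ω → ℝ) (hXmeas : ∀ n, Measurable (X n))
    (hindep : iIndepFun X P)
    (hlaw : ∀ n, P.map (X n) = gaussianReal 0 (κ n))
    (M : ℝ) (hM : (∑' n, (κ n : ℝ)) < M ^ 2) :
    P {ω | M ^ 2 ≤ ∑' n, (X n ω) ^ 2}
      ≤ ENNReal.ofReal (Real.exp
          (-((Real.exp 1 - 1) / (2 * Real.exp 1 * (κ 0 : ℝ))) * M ^ 2
            + (∑' n, (κ n : ℝ)) / (2 * (κ 0 : ℝ)))) := by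
  have hκ1pos : (0:ℝ) < (κ 0 : ℝ) := hκ1
  have he : (1:ℝ) < rexp 1 := by
    have := Real.add_one_lt_exp (one_ne_zero (α := ℝ))
    linarith
  set t : ℝ := (rexp 1 - 1) / (2 * rexp 1 * (κ 0 : ℝ)) with htdef
  have htpos : 0 < t := by
    rw [htdef]
    exact div_pos (by linarith) (by positivity)
  have hκn_le : ∀ n, (κ n : ℝ) ≤ (κ 0 : ℝ) := fun n => NNReal.coe_le_coe.mpr (hmono (Nat.zero_le n))
  have h2t0 : 2 * t * (κ 0 : ℝ) = (rexp 1 - 1) / rexp 1 := by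
    rw [htdef]
    field_simp
  have h2tv : ∀ n, 2 * t * (κ n : ℝ) < 1 := by
    intro n
    have h1 : 2 * t * (κ n : ℝ) ≤ 2 * t * (κ 0 : ℝ) := by
      have := hκn_le n
      nlinarith
    have h2 : (rexp 1 - 1) / rexp 1 < 1 := by
      rw [div_lt_one (exp_pos 1)]
      linarith
    calc 2 * t * (κ n : ℝ) ≤ 2 * t * (κ 0 : ℝ) := h1
      _ < 1 := by rw [h2t0]; exact h2
  -- mgf bound for each coordinate
  have hcont : ∀ n : ℕ, AEStronglyMeasurable (fun x : ℝ => rexp (t * x ^ 2)) (P.map (X n)) :=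
    fun n => (measurable_exp.comp ((measurable_id.pow_const 2).const_mul t)).aestronglyMeasurable
  have hint : ∀ n, Integrable (fun ω => rexp (t * (X n ω) ^ 2)) P := by
    intro n
    have h1 : Integrable (fun x : ℝ => rexp (t * x ^ 2)) (P.map (X n)) := by
      rw [hlaw n]
      exact (gauss_exp_sq_aux htpos.le (h2tv n)).1
    rwa [integrable_map_measure (hcont n) (hXmeas n).aemeasurable] at h1
  have hmgf : ∀ n, mgf (fun ω => (X n ω) ^ 2) P t ≤ rexp ((κ n : ℝ) / (2 * (κ 0 : ℝ))) := by
    intro n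
    have heq2 : ∫ x, rexp (t * x ^ 2) ∂(P.map (X n)) = ∫ ω, rexp (t * (X n ω) ^ 2) ∂P :=
      integral_map (hXmeas n).aemeasurable (hcont n)
    have hmgf_eq : mgf (fun ω => (X n ω) ^ 2) P t = ∫ x, rexp (t * x ^ 2) ∂(P.map (X n)) := by
      rw [heq2]
      rfl
    rw [hmgf_eq, hlaw n, (gauss_exp_sq_aux htpos.le (h2tv n)).2]
    exact sqrt_inv_le_exp_aux hκ1pos (κ n).coe_nonneg (hκn_le n) htdef
  have hSig0 : (0:ℝ) ≤ ∑' n, (κ n : ℝ) := tsum_nonneg fun n => (κ n).coe_nonneg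
  set C : ℝ := (∑' n, (κ n : ℝ)) / (2 * (κ 0 : ℝ)) with hC
  -- Chernoff bound for partial sums
  set SQ : ℕ → Ω → ℝ := fun n ω => (X n ω) ^ 2 with hSQ
  have hSQmeas : ∀ n, Measurable (SQ n) := fun n => (hXmeas n).pow_const 2
  have hSQindep : iIndepFun SQ P :=
    hindep.comp (fun _ (x : ℝ) => x ^ 2) (fun _ => measurable_id.pow_const 2)
  have hchernoff : ∀ (N : ℕ) (a : ℝ),
      P {ω | a ≤ ∑ n ∈ Finset.range N, (X n ω) ^ 2} ≤ ENNReal.ofReal (rexp (-t * a + C)) := by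
    intro N a
    have hintN : Integrable (fun ω => rexp (t * (∑ n ∈ Finset.range N, SQ n) ω)) P :=
      hSQindep.integrable_exp_mul_sum hSQmeas (fun i _ => hint i)
    have hbound := measure_ge_le_exp_mul_mgf (μ := P) (X := ∑ n ∈ Finset.range N, SQ n)
      a htpos.le hintN
    rw [hSQindep.mgf_sum hSQmeas] at hbound
    have hprod : ∏ n ∈ Finset.range N, mgf (SQ n) P t
        ≤ rexp (∑ n ∈ Finset.range N, (κ n : ℝ) / (2 * (κ 0 : ℝ))) := by
      rw [Real.exp_sum]
      exact Finset.prod_le_prod (fun i _ => mgf_nonneg) (fun i _ => hmgf i)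
    have hsum_le : ∑ n ∈ Finset.range N, (κ n : ℝ) / (2 * (κ 0 : ℝ)) ≤ C := by
      rw [hC, ← Finset.sum_div]
      gcongr
      exact Summable.sum_le_tsum (Finset.range N) (fun i _ => (κ i).coe_nonneg) hsum
    have htoReal : (P {ω | a ≤ (∑ n ∈ Finset.range N, SQ n) ω}).toReal ≤ rexp (-t * a + C) := by
      calc (P {ω | a ≤ (∑ n ∈ Finset.range N, SQ n) ω}).toReal
          ≤ rexp (-t * a) * ∏ n ∈ Finset.range N, mgf (SQ n) P t := hbound
        _ ≤ rexp (-t * a) * rexp C :=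
            mul_le_mul_of_nonneg_left
              (hprod.trans (Real.exp_le_exp.mpr hsum_le)) (exp_nonneg _)
        _ = rexp (-t * a + C) := (Real.exp_add _ _).symm
    have hset : {ω | a ≤ ∑ n ∈ Finset.range N, (X n ω) ^ 2}
        = {ω | a ≤ (∑ n ∈ Finset.range N, SQ n) ω} := by
      ext ω
      simp [hSQ, Finset.sum_apply]
    rw [hset, ENNReal.le_ofReal_iff_toReal_le (measure_ne_top P _) (exp_nonneg _)]
    exact htoReal
  -- epsilon approximation
  have hmain : ∀ ε : ℝ, 0 < ε →
      P {ω | M ^ 2 ≤ ∑' n, (X n ω) ^ 2} ≤ ENNReal.ofReal (rexp (-t * (M ^ 2 - ε) + C)) := by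
    intro ε hε
    set A : ℕ → Set Ω := fun N => {ω | M ^ 2 - ε ≤ ∑ n ∈ Finset.range N, (X n ω) ^ 2} with hA
    have hAmono : Monotone A := by
      intro N N' hNN' ω hω
      simp only [hA, Set.mem_setOf_eq] at hω ⊢
      exact le_trans hω (Finset.sum_le_sum_of_subset_of_nonneg
        (Finset.range_subset_range.2 hNN') (fun i _ _ => by positivity))
    have hsubset : {ω | M ^ 2 ≤ ∑' n, (X n ω) ^ 2} ⊆ ⋃ N, A N := by
      intro ω hω
      simp only [Set.mem_setOf_eq] at hω
      by_cases hsummable : Summable fun n => (X n ω) ^ 2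
      · have htend := hsummable.hasSum.tendsto_sum_nat
        have hlt : M ^ 2 - ε < ∑' n, (X n ω) ^ 2 := by linarith
        obtain ⟨N, hN⟩ := (htend.eventually (eventually_ge_nhds hlt)).exists
        exact Set.mem_iUnion.2 ⟨N, hN⟩
      · rw [tsum_eq_zero_of_not_summable hsummable] at hω
        have : (0:ℝ) < M ^ 2 := lt_of_le_of_lt hSig0 hM
        linarith
    calc P {ω | M ^ 2 ≤ ∑' n, (X n ω) ^ 2} ≤ P (⋃ N, A N) := measure_mono hsubset
      _ = ⨆ N, P (A N) := (hAmono.directed_le).measure_iUnion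
      _ ≤ ENNReal.ofReal (rexp (-t * (M ^ 2 - ε) + C)) :=
          iSup_le fun N => hchernoff N (M ^ 2 - ε)
  -- take ε → 0
  have hlim : Tendsto (fun k : ℕ => ENNReal.ofReal (rexp (-t * (M ^ 2 - 1 / (k + 1)) + C)))
      atTop (nhds (ENNReal.ofReal (rexp (-t * M ^ 2 + C)))) := by
    have h0 : Tendsto (fun k : ℕ => 1 / ((k : ℝ) + 1)) atTop (nhds 0) :=
      tendsto_one_div_add_atTop_nhds_zero_nat
    have hcont2 : Continuous fun ε : ℝ => ENNReal.ofReal (rexp (-t * (M ^ 2 - ε) + C)) := by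
      refine ENNReal.continuous_ofReal.comp (Real.continuous_exp.comp (by continuity))
    have h5 := (hcont2.tendsto 0).comp h0
    simpa [Function.comp_def] using h5
  have hfinal := ge_of_tendsto' hlim (fun k => hmain (1 / (k + 1)) (by positivity))
  calc P {ω | M ^ 2 ≤ ∑' n, (X n ω) ^ 2} ≤ ENNReal.ofReal (rexp (-t * M ^ 2 + C)) := hfinal
    _ = ENNReal.ofReal (Real.exp
          (-((Real.exp 1 - 1) / (2 * Real.exp 1 * (κ 0 : ℝ))) * M ^ 2
            + (∑' n, (κ n : ℝ)) / (2 * (κ 0 : ℝ)))) := by rw [htdef, hC]
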